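/- For every k ≥ 1 and all integers n₁, …, n_k ≥ 0, the graph E(n₁,…,n_k) is move equivalent via the moves (O) and (I-) to the graph E(0,…,0) with k entries equal to 0 (a plain cycle of length k). -/

import Mathlib

open Classical

/-- A graph in the sense of graph C*-algebras: finitely many vertices,
countably many edges, with source and range maps. -/
structure CKGraph where
  V : Type
  E : Type
  finV : Finite V
  cntE : Countable E
  s : E → V
  r : E → V

attribute [instance] CKGraph.finV CKGraph.cntE

namespace CKGraph

/-- Isomorphism of graphs: bijections on vertices and edges intertwining
the source and range maps. -/
def Iso (G H : CKGraph) : Prop :=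
  ∃ (f : G.V ≃ H.V) (g : G.E ≃ H.E),
    (∀ e, H.s (g e) = f (G.s e)) ∧ (∀ e, H.r (g e) = f (G.r e))

/-- A vertex is a source if it receives no edges. -/
def IsSource (G : CKGraph) (v : G.V) : Prop := ∀ e, G.r e ≠ v

/-- A vertex is a sink if it emits no edges. -/
def IsSink (G : CKGraph) (v : G.V) : Prop := ∀ e, G.s e ≠ v

/-- A vertex is regular if it emits at least one and only finitely many edges. -/
def Regular (G : CKGraph) (v : G.V) : Prop :=
  Nonempty {e : G.E // G.s e = v} ∧ Finite {e : G.E // G.s e = v}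

/-- The outsplit graph of `G` at the vertex `w` with respect to the
partition of `s⁻¹(w)` encoded by `P`. -/
noncomputable def outsplit (G : CKGraph) (w : G.V) (n : ℕ)
    (P : {e : G.E // G.s e = w} → Fin n) : CKGraph where
  V := {v : G.V // v ≠ w} ⊕ Fin n
  E := {e : G.E // G.r e ≠ w} ⊕ ({e : G.E // G.r e = w} × Fin n)
  finV := inferInstance
  cntE := inferInstance
  s := Sum.elim
    (fun e => if h : G.s e.1 = w then Sum.inr (P ⟨e.1, h⟩) else Sum.inl ⟨G.s e.1, h⟩)
    (fun ei => if h : G.s ei.1.1 = w then Sum.inr (P ⟨ei.1.1, h⟩)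
               else Sum.inl ⟨G.s ei.1.1, h⟩)
  r := Sum.elim
    (fun e => Sum.inl ⟨G.r e.1, e.2⟩)
    (fun ei => Sum.inr ei.2)

/-- Move (O): `H` is obtained from `G` by an outsplit at a non-sink `w`
with respect to a partition of `s⁻¹(w)` into nonempty sets, at most one of
which is infinite. -/
def MoveO (G H : CKGraph) : Prop :=
  ∃ (w : G.V) (n : ℕ) (P : {e : G.E // G.s e = w} → Fin n),
    Nonempty {e : G.E // G.s e = w} ∧
    Function.Surjective P ∧
    (∀ i j : Fin n, {e | P e = i}.Infinite → {e | P e = j}.Infinite → i = j) ∧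
    Iso (G.outsplit w n P) H

/-- The insplit graph of `G` at the regular vertex `w` with respect to the
partition of `r⁻¹(w)` (into possibly empty sets) encoded by `P`. -/
noncomputable def insplit (G : CKGraph) (w : G.V) (n : ℕ)
    (P : {e : G.E // G.r e = w} → Fin n) : CKGraph where
  V := {v : G.V // v ≠ w} ⊕ Fin n
  E := {e : G.E // G.s e ≠ w} ⊕ ({e : G.E // G.s e = w} × Fin n)
  finV := inferInstance
  cntE := inferInstance
  s := Sum.elim
    (fun e => Sum.inl ⟨G.s e.1, e.2⟩)
    (fun ei => Sum.inr ei.2)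
  r := Sum.elim
    (fun e => if h : G.r e.1 = w then Sum.inr (P ⟨e.1, h⟩) else Sum.inl ⟨G.r e.1, h⟩)
    (fun ei => if h : G.r ei.1.1 = w then Sum.inr (P ⟨ei.1.1, h⟩)
               else Sum.inl ⟨G.r ei.1.1, h⟩)

/-- Move (I-): `H` is obtained from `G` by an insplit at a regular vertex `w`
with respect to a partition of `r⁻¹(w)` into `n ≥ 1` possibly empty sets. -/
def MoveIm (G H : CKGraph) : Prop :=
  ∃ (w : G.V) (n : ℕ) (P : {e : G.E // G.r e = w} → Fin n),
    G.Regular w ∧ 1 ≤ n ∧ Iso (G.insplit w n P) H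

/-- Move (I+): `G` and `H` are both obtained from a common graph `K` by
insplitting at the same regular vertex via two partitions with the same
number of (possibly empty) sets. -/
def MoveIp (G H : CKGraph) : Prop :=
  ∃ (K : CKGraph) (w : K.V) (n : ℕ)
    (P Q : {e : K.E // K.r e = w} → Fin n),
    K.Regular w ∧ 1 ≤ n ∧
    Iso (K.insplit w n P) G ∧ Iso (K.insplit w n Q) H

/-- The reduced graph of `G` at a regular vertex `w` supporting no loop. -/
noncomputable def reduce (G : CKGraph) (w : G.V) : CKGraph where
  V := {v : G.V // v ≠ w} ⊕ Unit
  E := {e : G.E // G.s e ≠ w ∧ G.r e ≠ w} ⊕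
       (({e : G.E // G.r e = w} × {f : G.E // G.s f = w}) ⊕ {f : G.E // G.s f = w})
  finV := inferInstance
  cntE := inferInstance
  s := Sum.elim
    (fun e => Sum.inl ⟨G.s e.1, e.2.1⟩)
    (Sum.elim
      (fun ef => if h : G.s ef.1.1 = w then Sum.inr () else Sum.inl ⟨G.s ef.1.1, h⟩)
      (fun _ => Sum.inr ()))
  r := Sum.elim
    (fun e => Sum.inl ⟨G.r e.1, e.2.2⟩)
    (Sum.elim
      (fun ef => if h : G.r ef.2.1 = w then Sum.inr () else Sum.inl ⟨G.r ef.2.1, h⟩)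
      (fun f => if h : G.r f.1 = w then Sum.inr () else Sum.inl ⟨G.r f.1, h⟩))

/-- Move (R+): `H` is obtained from `G` by a unital reduction at a regular
vertex `w` which supports no loop. -/
def MoveRp (G H : CKGraph) : Prop :=
  ∃ w : G.V, G.Regular w ∧ (∀ e : G.E, ¬ (G.s e = w ∧ G.r e = w)) ∧
    Iso (G.reduce w) H

/-- Two graphs are move equivalent via the relation `R` (describing the
allowed moves) if there is a finite sequence of graphs starting at the first,
each obtained from the previous by a move in `R` or the inverse of such a
move, and ending at a graph isomorphic to the second. -/
def MoveEquiv (R : CKGraph → CKGraph → Prop) (G H : CKGraph) : Prop :=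
  ∃ K, Relation.ReflTransGen (fun A B => R A B ∨ R B A) G K ∧ Iso K H

/-- The graph `G(c,n)`: a vertex with `c` loops, receiving `n` edges from a
second (source) vertex; for `n = 0` the source vertex is omitted. -/
def Gcn (c n : ℕ) : CKGraph where
  V := Unit ⊕ Fin (min n 1)
  E := Fin c ⊕ Fin n
  finV := inferInstance
  cntE := inferInstance
  s := Sum.elim (fun _ => Sum.inl ()) (fun e => Sum.inr ⟨0, lt_min e.pos one_pos⟩)
  r := fun _ => Sum.inl ()

/-- The graph with adjacency matrix `A` (the `(i,j)` entry being the number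
of edges from vertex `i` to vertex `j`). -/
def adjGraph {k : ℕ} (A : Fin k → Fin k → ℕ) : CKGraph where
  V := Fin k
  E := (i : Fin k) × (j : Fin k) × Fin (A i j)
  finV := inferInstance
  cntE := inferInstance
  s := fun e => e.1
  r := fun e => e.2.1


/-- Entry-wise product of two 2×2 matrices of natural numbers. -/
def matMul (A B : Fin 2 → Fin 2 → ℕ) : Fin 2 → Fin 2 → ℕ := fun i j => ∑ l, A i l * B l j

/-- Matrix-vector product for 2×2 matrices of natural numbers. -/
def matVec (A : Fin 2 → Fin 2 → ℕ) (D : Fin 2 → ℕ) : Fin 2 → ℕ := fun i => ∑ l, A i l * D l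

def T1 : Fin 2 → Fin 2 → ℕ := ![![1, 1], ![0, 1]]

def T2 : Fin 2 → Fin 2 → ℕ := ![![1, 0], ![1, 1]]

/-- The graph represented by the pair `(D, B)`: the graph `Γ(d₁-1, d₂-1; a)`
with `a i j = b j i + δ i j`. -/
def pairGraph (D : Fin 2 → ℕ) (B : Fin 2 → Fin 2 → ℕ) : CKGraph :=
  adjGraph ![![0, D 0 - 1, D 1 - 1], ![0, B 0 0 + 1, B 1 0], ![0, B 0 1, B 1 1 + 1]]

/-- Number of edges emitted by the auxiliary source attached above vertex
`u_t` in the graph `F(n₁,…,n_k)`; here `n t` denotes `n_{t+1}` (0-indexed). -/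
def srcCount (k : ℕ) (n : Fin k → ℕ) (t : Fin k) : ℕ :=
  if t.val + 1 < k then n t - 1 else n t

/-- The graph `F(n₁,…,n_k)` : vertices `u₀,…,u_{k-1}` (`u₀` a sink), one edge
`u_j → u_{j-1}` for `1 ≤ j ≤ k-1`, and for each `t` a source emitting
`srcCount` edges to `u_t` (present only when that count is positive), so that
the number of paths of length `i` ending at `u₀` is `nᵢ`. -/
def Fgraph (k : ℕ) (n : Fin k → ℕ) : CKGraph where
  V := Fin k ⊕ {t : Fin k // 0 < srcCount k n t}
  E := {j : Fin k // 0 < j.val} ⊕ ((t : Fin k) × Fin (srcCount k n t))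
  finV := inferInstance
  cntE := inferInstance
  s := Sum.elim (fun j => Sum.inl j.1) (fun te => Sum.inr ⟨te.1, te.2.pos⟩)
  r := Sum.elim
    (fun j => Sum.inl ⟨j.1.val - 1, lt_of_le_of_lt (Nat.sub_le _ _) j.1.isLt⟩)
    (fun te => Sum.inl te.1)

/-- The graph `E(n₁,…,n_k)` : a cycle `v₀ → v₁ → ⋯ → v_{k-1} → v₀` together
with a single extra vertex emitting `n i` edges to `v i`; the extra vertex is
omitted when all `n i = 0`. -/
def Egraph (k : ℕ) (n : Fin k → ℕ) : CKGraph where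
  V := Fin k ⊕ {_u : Unit // ∃ i, 0 < n i}
  E := Fin k ⊕ ((i : Fin k) × Fin (n i))
  finV := inferInstance
  cntE := inferInstance
  s := Sum.elim (fun j => Sum.inl j) (fun ie => Sum.inr ⟨(), ⟨ie.1, ie.2.pos⟩⟩)
  r := Sum.elim (fun j => Sum.inl ⟨(j.val + 1) % k, Nat.mod_lt _ j.pos⟩)
    (fun ie => Sum.inl ie.1)

/-- The graph `T k` : vertices `u₀,…,u_k`, countably infinitely many loops at
`u₀` and exactly one edge `u_j → u_{j-1}` for `1 ≤ j ≤ k`. -/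
def Tgraph (k : ℕ) : CKGraph where
  V := Fin (k + 1)
  E := ℕ ⊕ {j : Fin (k + 1) // 0 < j.val}
  finV := inferInstance
  cntE := inferInstance
  s := Sum.elim (fun _ => ⟨0, Nat.succ_pos k⟩) (fun j => j.1)
  r := Sum.elim (fun _ => ⟨0, Nat.succ_pos k⟩)
    (fun j => ⟨j.1.val - 1, lt_of_le_of_lt (Nat.sub_le _ _) j.1.isLt⟩)

/-- One-step reachability: there is an edge from `u` to `v`. -/
def Step (G : CKGraph) (u v : G.V) : Prop := ∃ e, G.s e = u ∧ G.r e = v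

/-- There is a (possibly empty) path from `u` to `v`. -/
def Reaches (G : CKGraph) : G.V → G.V → Prop := Relation.ReflTransGen G.Step

/-- `v` lies on a cycle: there is a nontrivial path from `v` back to `v`. -/
def OnCycle (G : CKGraph) (v : G.V) : Prop := ∃ u, G.Step v u ∧ G.Reaches u v

/-- The core of `G`: the vertices lying on cycles if `G` has a cycle, and
otherwise the sinks. -/
def core (G : CKGraph) (v : G.V) : Prop :=
  ((∃ u, G.OnCycle u) → G.OnCycle v) ∧ ((¬ ∃ u, G.OnCycle u) → G.IsSink v)

/-- A transitional vertex: neither a source nor in the core. -/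
def Transitional (G : CKGraph) (v : G.V) : Prop := ¬ G.IsSource v ∧ ¬ G.core v

/-- The core hypotheses: any two vertices on cycles are mutually connected by
paths; if there is a cycle there are no sinks, otherwise there is exactly one
sink; every vertex reaches the core; and every non-core vertex emits only
finitely many edges. -/
structure CoreHyp (G : CKGraph) : Prop where
  conn : ∀ u v, G.OnCycle u → G.OnCycle v → G.Reaches u v
  noSinks : (∃ v, G.OnCycle v) → ∀ v, ¬ G.IsSink v
  uniqueSink : (¬ ∃ v, G.OnCycle v) → ∃! v, G.IsSink v
  reach : ∀ v, ∃ c, G.core c ∧ G.Reaches v c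
  finEmit : ∀ v, ¬ G.core v → Finite {e : G.E // G.s e = v}

/-- The core subgraph: core vertices together with all edges between them. -/
def coreSubgraph (G : CKGraph) : CKGraph where
  V := {v : G.V // G.core v}
  E := {e : G.E // G.core (G.s e) ∧ G.core (G.r e)}
  finV := inferInstance
  cntE := inferInstance
  s := fun e => ⟨G.s e.1, e.2.1⟩
  r := fun e => ⟨G.r e.1, e.2.2⟩

end CKGraph

open CKGraph

set_option maxHeartbeats 1000000

lemma CKGraph.iso_refl (G : CKGraph) : Iso G G :=
  ⟨Equiv.refl _, Equiv.refl _, fun _ => rfl, fun _ => rfl⟩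

section Aux

variable (k : ℕ) (m : Fin k → ℕ) (j : Fin k)

/-- `m` with one extra edge at `j`. -/
def updE : Fin k → ℕ := Function.update m j (m j + 1)

lemma updE_pos : 0 < updE k m j j := by simp [updE]

lemma le_updE (t : Fin k) : m t ≤ updE k m j t := by
  rcases eq_or_ne t j with h | h
  · subst h; simp [updE]
  · simp [updE, Function.update_of_ne h]

lemma updE_lt (t : Fin k) (x : ℕ) (hx : x < updE k m j t) (hne : ¬(t = j ∧ x = m j)) :
    x < m t := by
  rcases eq_or_ne t j with h | h
  · rw [updE, h, Function.update_self] at hx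
    have hxx : x ≠ m j := fun hxx => hne ⟨h, hxx⟩
    rw [h]; omega
  · rwa [updE, Function.update_of_ne h] at hx

/-- The distinguished source vertex of `Egraph k (updE k m j)`. -/
def uVert : (Egraph k (updE k m j)).V := Sum.inr ⟨(), ⟨j, updE_pos k m j⟩⟩

lemma inr_eq_uVert (u : {_u : Unit // ∃ t, 0 < updE k m j t}) :
    (Sum.inr u : (Egraph k (updE k m j)).V) = uVert k m j := by
  rw [uVert]

/-- The distinguished new edge. -/
def newE : (Egraph k (updE k m j)).E :=
  Sum.inr ⟨j, ⟨m j, by rw [updE, Function.update_self]; omega⟩⟩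

/-- Partition of the edges emitted by the source of `Egraph k (updE k m j)`. -/
noncomputable def P2 : {e : (Egraph k (updE k m j)).E //
    (Egraph k (updE k m j)).s e = uVert k m j} → Fin 2 :=
  fun e => if e.1 = newE k m j then 0 else 1

lemma Egraph_r_ne_inr (n : Fin k → ℕ) (e : (Egraph k n).E) (z) :
    (Egraph k n).r e ≠ Sum.inr z := by
  rcases e with t | ⟨t, x⟩ <;> simp [Egraph]

lemma Egraph_r_ne_uVert (e : (Egraph k (updE k m j)).E) :
    (Egraph k (updE k m j)).r e ≠ uVert k m j := by
  rw [uVert]; exact Egraph_r_ne_inr k _ e _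

lemma Egraph_s_eq_inl (n : Fin k → ℕ) (e : (Egraph k n).E) (t : Fin k)
    (h : (Egraph k n).s e = Sum.inl t) : e = Sum.inl t := by
  rcases e with t' | ⟨t', x⟩
  · simpa [Egraph] using h
  · simp [Egraph] at h

end Aux

section Iso

variable (k : ℕ) (m : Fin k → ℕ) (j i : Fin k)

/-- Vertex map for the main isomorphism. -/
noncomputable def fV (hm : ∃ t, 0 < m t) :
    ((Egraph k (updE k m j)).outsplit (uVert k m j) 2 (P2 k m j)).V →
    ((Egraph k m).insplit (Sum.inl i) 2 (fun _ => 0)).V :=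
  fun x => match x with
  | Sum.inl ⟨Sum.inl t, _⟩ =>
      if h : t = i then Sum.inr 0 else Sum.inl ⟨Sum.inl t, fun hc => h (Sum.inl.inj hc)⟩
  | Sum.inl ⟨Sum.inr u, h⟩ => absurd (inr_eq_uVert k m j u) h
  | Sum.inr c => if c = 0 then Sum.inr 1 else Sum.inl ⟨Sum.inr ⟨(), hm⟩, Sum.inr_ne_inl⟩

/-- Inverse vertex map. -/
noncomputable def fVinv :
    ((Egraph k m).insplit (Sum.inl i) 2 (fun _ => 0)).V →
    ((Egraph k (updE k m j)).outsplit (uVert k m j) 2 (P2 k m j)).V :=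
  fun y => match y with
  | Sum.inl ⟨Sum.inl t, _⟩ => Sum.inl ⟨Sum.inl t, by rw [uVert]; exact Sum.inl_ne_inr⟩
  | Sum.inl ⟨Sum.inr _, _⟩ => Sum.inr 1
  | Sum.inr c => if c = 0 then Sum.inl ⟨Sum.inl i, by rw [uVert]; exact Sum.inl_ne_inr⟩ else Sum.inr 0

/-- Edge map for the main isomorphism. -/
noncomputable def gE :
    ((Egraph k (updE k m j)).outsplit (uVert k m j) 2 (P2 k m j)).E →
    ((Egraph k m).insplit (Sum.inl i) 2 (fun _ => 0)).E :=
  fun x => match x with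
  | Sum.inl ⟨Sum.inl t, _⟩ =>
      if h : t = i then Sum.inr (⟨Sum.inl i, rfl⟩, 0)
      else Sum.inl ⟨Sum.inl t, by simp [Egraph, h]⟩
  | Sum.inl ⟨Sum.inr ⟨t, x⟩, _⟩ =>
      if h : t = j ∧ (x : ℕ) = m j then Sum.inr (⟨Sum.inl i, rfl⟩, 1)
      else Sum.inl ⟨Sum.inr ⟨t, ⟨x, updE_lt k m j t x x.2 h⟩⟩, by simp [Egraph]⟩
  | Sum.inr (⟨e, hre⟩, _) => absurd hre (Egraph_r_ne_uVert k m j e)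

/-- Inverse edge map. -/
noncomputable def gEinv :
    ((Egraph k m).insplit (Sum.inl i) 2 (fun _ => 0)).E →
    ((Egraph k (updE k m j)).outsplit (uVert k m j) 2 (P2 k m j)).E :=
  fun y => match y with
  | Sum.inl ⟨Sum.inl t, _⟩ => Sum.inl ⟨Sum.inl t, Egraph_r_ne_uVert k m j _⟩
  | Sum.inl ⟨Sum.inr ⟨t, x⟩, _⟩ =>
      Sum.inl ⟨Sum.inr ⟨t, ⟨x, lt_of_lt_of_le x.2 (le_updE k m j t)⟩⟩,
        Egraph_r_ne_uVert k m j _⟩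
  | Sum.inr (_, c) =>
      if c = 0 then Sum.inl ⟨Sum.inl i, Egraph_r_ne_uVert k m j _⟩
      else Sum.inl ⟨newE k m j, Egraph_r_ne_uVert k m j _⟩

end Iso

lemma iso_main (k : ℕ) (m : Fin k → ℕ) (j i : Fin k) (hm : ∃ t, 0 < m t)
    (hij : ((i : ℕ) + 1) % k = (j : ℕ)) :
    Iso ((Egraph k (updE k m j)).outsplit (uVert k m j) 2 (P2 k m j))
        ((Egraph k m).insplit (Sum.inl i) 2 (fun _ => 0)) := by
  refine ⟨⟨fV k m j i hm, fVinv k m j i, ?_, ?_⟩, ⟨gE k m j i, gEinv k m j i, ?_, ?_⟩, ?_, ?_⟩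
  · -- left inverse, vertices
    rintro (⟨t | u, h⟩ | c)
    · by_cases ht : t = i <;> simp [fV, fVinv, ht] <;> rfl
    · exact absurd (inr_eq_uVert k m j u) h
    · fin_cases c <;> simp [fV, fVinv] <;> rfl
  · -- right inverse, vertices
    rintro (⟨t | u, h⟩ | c)
    · have ht : t ≠ i := fun e => h (congrArg Sum.inl e)
      simp [fV, fVinv, ht] <;> rfl
    · obtain ⟨⟨⟩, hu⟩ := u
      simp [fV, fVinv] <;> rfl
    · fin_cases c <;> simp [fV, fVinv] <;> rfl
  · -- left inverse, edges
    rintro (⟨t | ⟨t, x⟩, h⟩ | ⟨⟨e, hre⟩, c⟩)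
    · by_cases ht : t = i <;> simp [gE, gEinv, ht] <;> rfl
    · by_cases hx : t = j ∧ (x : ℕ) = m j
      · rcases x with ⟨xv, hxv⟩
        obtain ⟨rfl, rfl⟩ := hx
        simp [gE, gEinv, newE] <;> rfl
      · simp only [gE]
        erw [dif_neg hx]
        simp [gEinv] <;> rfl
    · exact absurd hre (Egraph_r_ne_uVert k m j e)
  · -- right inverse, edges
    rintro (⟨t | ⟨t, x⟩, h⟩ | ⟨⟨e, hse⟩, c⟩)
    · have ht : t ≠ i := fun e => h (congrArg Sum.inl e)
      simp [gE, gEinv, ht] <;> rfl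
    · have hcond : ¬(t = j ∧ ((⟨(x : ℕ), lt_of_lt_of_le x.2 (le_updE k m j t)⟩ :
          Fin (updE k m j t)) : ℕ) = m j) := by
        rintro ⟨rfl, h2⟩
        exact absurd h2 (Nat.ne_of_lt x.2)
      simp only [gEinv, gE]
      erw [dif_neg hcond]
    · have he : e = Sum.inl i := Egraph_s_eq_inl k m e i hse
      subst he
      fin_cases c <;> simp [gE, gEinv, newE] <;> rfl
  · -- intertwining s
    rintro (⟨t | ⟨t, x⟩, h⟩ | ⟨⟨e, hre⟩, c⟩)
    · by_cases ht : t = i <;>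
        simp only [Equiv.coe_fn_mk] <;> simp [gE, fV, outsplit, insplit, Egraph, ht, uVert]
    · have hs : (Egraph k (updE k m j)).s (Sum.inr ⟨t, x⟩) = uVert k m j := rfl
      by_cases hx : t = j ∧ (x : ℕ) = m j
      · have hnew : (Sum.inr ⟨t, x⟩ : (Egraph k (updE k m j)).E) = newE k m j := by
          rw [newE]
          obtain ⟨rfl, hxv⟩ := hx
          exact congrArg Sum.inr (Sigma.ext rfl (heq_of_eq (Fin.ext hxv)))
        have hP : P2 k m j ⟨Sum.inr ⟨t, x⟩, hs⟩ = 0 := by simp [P2, hnew]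
        simp only [Equiv.coe_fn_mk]
        simp only [gE]
        erw [dif_pos hx, show ((Egraph k (updE k m j)).outsplit (uVert k m j) 2 (P2 k m j)).s (Sum.inl ⟨Sum.inr ⟨t, x⟩, h⟩) = Sum.inr 0 from (dif_pos hs).trans (congrArg Sum.inr hP)]
        simp [fV, insplit]
      · have hne : (Sum.inr ⟨t, x⟩ : (Egraph k (updE k m j)).E) ≠ newE k m j := by
          rw [newE]
          intro hc
          have hc2 := Sum.inr.inj hc
          exact hx ⟨congrArg Sigma.fst hc2, congrArg (fun p => ((p.2 : Fin _) : ℕ)) hc2⟩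
        have hP : P2 k m j ⟨Sum.inr ⟨t, x⟩, hs⟩ = 1 := by simp [P2]; exact hne
        simp only [Equiv.coe_fn_mk]
        simp only [gE]
        erw [dif_neg hx, show ((Egraph k (updE k m j)).outsplit (uVert k m j) 2 (P2 k m j)).s (Sum.inl ⟨Sum.inr ⟨t, x⟩, h⟩) = Sum.inr 1 from (dif_pos hs).trans (congrArg Sum.inr hP)]
        simp [fV, insplit, Egraph]
    · exact absurd hre (Egraph_r_ne_uVert k m j e)
  · -- intertwining r
    rintro (⟨t | ⟨t, x⟩, h⟩ | ⟨⟨e, hre⟩, c⟩)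
    · by_cases ht : t = i <;> by_cases hji : j = i <;>
        simp only [Equiv.coe_fn_mk] <;> simp [gE, fV, insplit, outsplit, Egraph, ht, hji, hij, Fin.ext_iff] <;> exact dite_congr (by simp [Fin.ext_iff]) (fun _ => rfl) (fun _ => rfl)
    · by_cases hx : t = j ∧ (x : ℕ) = m j
      · obtain ⟨rfl, hxv⟩ := hx
        by_cases hji : t = i <;>
          simp only [Equiv.coe_fn_mk] <;> simp [gE, fV, insplit, outsplit, Egraph, hxv, hji, hij, Fin.ext_iff]
      · simp only [Equiv.coe_fn_mk]
        simp only [gE]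
        erw [dif_neg hx]
        by_cases ht : t = i
        · have e : (Sum.inr 0 : ((Egraph k m).insplit (Sum.inl i) 2 (fun _ => 0)).V) = fV k m j i hm (Sum.inl ⟨Sum.inl t, by rw [uVert]; exact Sum.inl_ne_inr⟩) := by simp [fV, ht]
          exact (dif_pos (congrArg Sum.inl ht)).trans e
        · have e : (Sum.inl ⟨Sum.inl t, fun hc => ht (Sum.inl.inj hc)⟩ : ((Egraph k m).insplit (Sum.inl i) 2 (fun _ => 0)).V) = fV k m j i hm (Sum.inl ⟨Sum.inl t, by rw [uVert]; exact Sum.inl_ne_inr⟩) := by simp [fV, ht]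
          exact (dif_neg (fun hc => ht (Sum.inl.inj hc))).trans e
    · exact absurd hre (Egraph_r_ne_uVert k m j e)

section Base

variable (k : ℕ) (m : Fin k → ℕ) (j i : Fin k)

/-- Vertex map for the base isomorphism. -/
noncomputable def fB (hm0 : ¬∃ t, 0 < m t) :
    ((Egraph k m).insplit (Sum.inl i) 2 (fun _ => 0)).V → (Egraph k (updE k m j)).V :=
  fun x => match x with
  | Sum.inl ⟨Sum.inl t, _⟩ => Sum.inl t
  | Sum.inl ⟨Sum.inr u, _⟩ => absurd u.2 hm0
  | Sum.inr c => if c = 0 then Sum.inl i else Sum.inr ⟨(), ⟨j, updE_pos k m j⟩⟩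

/-- Inverse vertex map for the base isomorphism. -/
noncomputable def fBinv :
    (Egraph k (updE k m j)).V → ((Egraph k m).insplit (Sum.inl i) 2 (fun _ => 0)).V :=
  fun y => match y with
  | Sum.inl t =>
      if h : t = i then Sum.inr 0 else Sum.inl ⟨Sum.inl t, fun hc => h (Sum.inl.inj hc)⟩
  | Sum.inr _ => Sum.inr 1

/-- Edge map for the base isomorphism. -/
noncomputable def gB (hm0 : ¬∃ t, 0 < m t) :
    ((Egraph k m).insplit (Sum.inl i) 2 (fun _ => 0)).E → (Egraph k (updE k m j)).E :=
  fun x => match x with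
  | Sum.inl ⟨Sum.inl t, _⟩ => Sum.inl t
  | Sum.inl ⟨Sum.inr ⟨t, x⟩, _⟩ => absurd ⟨t, x.pos⟩ hm0
  | Sum.inr (_, c) => if c = 0 then Sum.inl i else newE k m j

/-- Inverse edge map for the base isomorphism. -/
noncomputable def gBinv :
    (Egraph k (updE k m j)).E → ((Egraph k m).insplit (Sum.inl i) 2 (fun _ => 0)).E :=
  fun y => match y with
  | Sum.inl t =>
      if h : t = i then Sum.inr (⟨Sum.inl i, rfl⟩, 0)
      else Sum.inl ⟨Sum.inl t, fun hc => h (Sum.inl.inj hc)⟩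
  | Sum.inr _ => Sum.inr (⟨Sum.inl i, rfl⟩, 1)

lemma iso_base (hm0 : ¬∃ t, 0 < m t) (hij : ((i : ℕ) + 1) % k = (j : ℕ)) :
    Iso ((Egraph k m).insplit (Sum.inl i) 2 (fun _ => 0)) (Egraph k (updE k m j)) := by
  have hmz : ∀ t, m t = 0 := fun t => Nat.eq_zero_of_not_pos (fun hp => hm0 ⟨t, hp⟩)
  refine ⟨⟨fB k m j i hm0, fBinv k m j i, ?_, ?_⟩,
    ⟨gB k m j i hm0, gBinv k m j i, ?_, ?_⟩, ?_, ?_⟩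
  · -- left inverse, vertices
    rintro (⟨t | u, h⟩ | c)
    · have ht : t ≠ i := fun e => h (congrArg Sum.inl e)
      simp [fB, fBinv, ht] <;> rfl
    · exact absurd u.2 hm0
    · fin_cases c <;> simp [fB, fBinv] <;> rfl
  · -- right inverse, vertices
    rintro (t | u)
    · by_cases ht : t = i <;> simp [fB, fBinv, ht] <;> rfl
    · obtain ⟨⟨⟩, hu⟩ := u
      simp [fB, fBinv] <;> rfl
  · -- left inverse, edges
    rintro (⟨t | ⟨t, x⟩, h⟩ | ⟨⟨e, hse⟩, c⟩)
    · have ht : t ≠ i := fun e => h (congrArg Sum.inl e)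
      simp [gB, gBinv, ht] <;> rfl
    · exact absurd ⟨t, x.pos⟩ hm0
    · have he : e = Sum.inl i := Egraph_s_eq_inl k m e i hse
      subst he
      fin_cases c <;> simp [gB, gBinv, newE] <;> rfl
  · -- right inverse, edges
    rintro (t | ⟨t, x⟩)
    · by_cases ht : t = i <;> simp [gB, gBinv, ht] <;> rfl
    · have ht : t = j := by
        by_contra hne
        have hx := x.2
        simp only [updE] at hx
        have h1 : Function.update m j (m j + 1) t = m t := Function.update_of_ne hne _ _
        have := hmz t
        omega
      subst ht
      rcases x with ⟨xv, hxv2⟩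
      obtain rfl : xv = m t := by
        have hx := hxv2
        simp only [updE] at hx
        have h1 : Function.update m t (m t + 1) t = m t + 1 := Function.update_self _ _ _
        have := hmz t
        omega
      simp [gB, gBinv, newE] <;> rfl
  · -- intertwining s
    rintro (⟨t | ⟨t, x⟩, h⟩ | ⟨⟨e, hse⟩, c⟩)
    · simp only [Equiv.coe_fn_mk] <;> simp [gB, fB, insplit, Egraph]
    · exact absurd ⟨t, x.pos⟩ hm0
    · fin_cases c <;> simp only [Equiv.coe_fn_mk] <;> simp [gB, fB, insplit, Egraph, newE]
  · -- intertwining r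
    rintro (⟨t | ⟨t, x⟩, h⟩ | ⟨⟨e, hse⟩, c⟩)
    · by_cases hnt : ((t : ℕ) + 1) % k = (i : ℕ) <;>
        simp only [Equiv.coe_fn_mk] <;> simp [gB, fB, insplit, Egraph, hnt, Fin.ext_iff]
    · exact absurd ⟨t, x.pos⟩ hm0
    · have he : e = Sum.inl i := Egraph_s_eq_inl k m e i hse
      subst he
      by_cases hji : (j : ℕ) = (i : ℕ) <;>
        fin_cases c <;> simp only [Equiv.coe_fn_mk] <;> simp [gB, fB, insplit, Egraph, newE, hij, hji, Fin.ext_iff]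

end Base

lemma Egraph_regular (k : ℕ) (n : Fin k → ℕ) (t : Fin k) :
    (Egraph k n).Regular (Sum.inl t) := by
  haveI : Finite (Egraph k n).E := by dsimp [Egraph]; infer_instance
  exact ⟨⟨⟨Sum.inl t, rfl⟩⟩, inferInstance⟩

lemma P2_surj (k : ℕ) (m : Fin k → ℕ) (j : Fin k) (hm : ∃ t, 0 < m t) :
    Function.Surjective (P2 k m j) := by
  intro b
  fin_cases b
  · exact ⟨⟨newE k m j, rfl⟩, by simp [P2]⟩
  · obtain ⟨t, ht⟩ := hm
    refine ⟨⟨Sum.inr ⟨t, ⟨0, lt_of_lt_of_le ht (le_updE k m j t)⟩⟩, rfl⟩, ?_⟩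
    have hne : (Sum.inr ⟨t, ⟨0, lt_of_lt_of_le ht (le_updE k m j t)⟩⟩ :
        (Egraph k (updE k m j)).E) ≠ newE k m j := by
      rw [newE]
      intro hc
      have hc2 := Sum.inr.inj hc
      have h1 : t = j := congrArg Sigma.fst hc2
      have h2 : (0 : ℕ) = m j := congrArg (fun p => ((p.2 : Fin _) : ℕ)) hc2
      rw [h1] at ht
      omega
    simp [P2]; exact hne

lemma step_chain (k : ℕ) (hk : 1 ≤ k) (m : Fin k → ℕ) (j : Fin k) :
    Relation.ReflTransGen
      (fun A B => (MoveO A B ∨ MoveIm A B) ∨ (MoveO B A ∨ MoveIm B A))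
      (Egraph k (updE k m j)) (Egraph k m) := by
  have hkpos : 0 < k := hk
  set i : Fin k := ⟨((j : ℕ) + k - 1) % k, Nat.mod_lt _ hkpos⟩ with hi
  have hij : ((i : ℕ) + 1) % k = (j : ℕ) := by
    show (((j : ℕ) + k - 1) % k + 1) % k = (j : ℕ)
    rw [Nat.mod_add_mod]
    have h1 : (j : ℕ) + k - 1 + 1 = (j : ℕ) + k := by omega
    rw [h1, Nat.add_mod_right, Nat.mod_eq_of_lt j.isLt]
  have hfin : Finite {e : (Egraph k (updE k m j)).E //
      (Egraph k (updE k m j)).s e = uVert k m j} := by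
    haveI : Finite (Egraph k (updE k m j)).E := by dsimp [Egraph]; infer_instance
    infer_instance
  by_cases hm : ∃ t, 0 < m t
  · refine Relation.ReflTransGen.head
      (b := (Egraph k m).insplit (Sum.inl i) 2 (fun _ => 0)) (Or.inl (Or.inl ?_))
      (Relation.ReflTransGen.single (Or.inr (Or.inr ?_)))
    · exact ⟨uVert k m j, 2, P2 k m j, ⟨⟨newE k m j, rfl⟩⟩, P2_surj k m j hm,
        fun a b ha _ => absurd ha (Set.not_infinite.mpr (Set.toFinite _)),
        iso_main k m j i hm hij⟩
    · exact ⟨Sum.inl i, 2, fun _ => 0, Egraph_regular k m i, one_le_two, CKGraph.iso_refl _⟩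
  · exact Relation.ReflTransGen.single (Or.inr (Or.inr
      ⟨Sum.inl i, 2, fun _ => 0, Egraph_regular k m i, one_le_two, iso_base k m j i hm hij⟩))

/-- For `k ≥ 1` and `n₁, …, n_k ≥ 0`, the graph `E(n₁,…,n_k)` is
move equivalent via the moves (O) and (I-) to the plain cycle `E(0,…,0)` of
length `k`. -/
theorem Egraph_moveEquiv_O_Iminus (k : ℕ) (hk : 1 ≤ k) (n : Fin k → ℕ) :
    MoveEquiv (fun A B => MoveO A B ∨ MoveIm A B)
      (Egraph k n) (Egraph k (fun _ => 0)) := by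
  refine ⟨Egraph k (fun _ => 0), ?_, CKGraph.iso_refl _⟩
  suffices h : ∀ (N : ℕ) (n : Fin k → ℕ), (∑ t, n t) = N →
      Relation.ReflTransGen
        (fun A B => (MoveO A B ∨ MoveIm A B) ∨ (MoveO B A ∨ MoveIm B A))
        (Egraph k n) (Egraph k (fun _ => 0)) from h _ n rfl
  intro N
  induction N with
  | zero =>
    intro n hn
    have hz : ∀ t, n t = 0 := fun t =>
      Finset.sum_eq_zero_iff.mp hn t (Finset.mem_univ t)
    have hn0 : n = fun _ => 0 := funext hz
    rw [hn0]
  | succ N ih =>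
    intro n hn
    have hex : ∃ t, n t ≠ 0 := by
      by_contra hc
      push_neg at hc
      simp [hc] at hn
    obtain ⟨t0, ht0⟩ := hex
    set m' : Fin k → ℕ := Function.update n t0 (n t0 - 1) with hm'
    have h1 : updE k m' t0 = n := by
      funext t
      rcases eq_or_ne t t0 with rfl | hne
      · simp only [updE, hm', Function.update_self]
        omega
      · simp only [updE, hm', Function.update_of_ne hne]
    have h2 : (∑ t, m' t) = N := by
      have ha : n t0 + ∑ t ∈ Finset.univ.erase t0, n t = ∑ t, n t :=
        Finset.add_sum_erase Finset.univ n (Finset.mem_univ t0)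
      have hb : m' t0 + ∑ t ∈ Finset.univ.erase t0, m' t = ∑ t, m' t :=
        Finset.add_sum_erase Finset.univ m' (Finset.mem_univ t0)
      have hsame : ∑ t ∈ Finset.univ.erase t0, m' t = ∑ t ∈ Finset.univ.erase t0, n t :=
        Finset.sum_congr rfl fun t ht => by
          rw [hm', Function.update_of_ne (Finset.ne_of_mem_erase ht)]
      have hc : m' t0 = n t0 - 1 := by rw [hm', Function.update_self]
      omega
    have hstep := step_chain k hk m' t0
    rw [h1] at hstep
    exact hstep.trans (ih m' h2)
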